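/- Let Γ be a finite connected graph and let λ, λ' : E(Γ) → ℤ \ {0} be two labelings with |λ(e)| = |λ'(e)| for all edges e. If the orientation homomorphisms H_1(Γ) → {±1} induced by λ and λ' agree (i.e., for every cycle, the sign of ∏ λ(ē_i)/λ(e_i) equals the sign of ∏ λ'(ē_i)/λ'(e_i)), then λ' can be obtained from λ by a sequence of admissible sign changes. -/

import Mathlib

/-- A closed edge path in a graph with vertex map ι and reversal bar. -/
def IsClosedPath {V E : Type*} (ι : E → V) (bar : E → E) (l : List E) : Prop :=
  l ≠ [] ∧ ∀ i : Fin l.length,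
    ι (bar (l.get i)) = ι (l.get ⟨(i.1 + 1) % l.length, Nat.mod_lt _ i.pos⟩)

/-- The modulus ∏ λ(ē_i)/λ(e_i) of an edge sequence, as a rational number. -/
def pathModulus {V E : Type*} (ι : E → V) (bar : E → E) (lab : E → ℤ) (l : List E) : ℚ :=
  (l.map fun e => (lab (bar e) : ℚ) / (lab e : ℚ)).prod

/-- Auxiliary: a walk from `a` to `b` along edges in `l`. -/
def IsWalkAux {V E : Type*} (ι : E → V) (bar : E → E) : V → V → List E → Prop
  | a, b, [] => a = b
  | a, b, e :: l => ι e = a ∧ IsWalkAux ι bar (ι (bar e)) b l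

lemma isWalkAux_append {V E : Type*} (ι : E → V) (bar : E → E) :
    ∀ (l l' : List E) (a b c : V), IsWalkAux ι bar a b l → IsWalkAux ι bar b c l' →
      IsWalkAux ι bar a c (l ++ l')
  | [], l', a, b, c, h, h' => by
      have hab : a = b := h
      subst hab; exact h'
  | e :: l, l', a, b, c, h, h' => ⟨h.1, isWalkAux_append ι bar l l' _ b c h.2 h'⟩

lemma isWalkAux_reverse {V E : Type*} (ι : E → V) (bar : E → E)
    (hbar : ∀ e, bar (bar e) = e) :
    ∀ (l : List E) (a b : V), IsWalkAux ι bar a b l →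
      IsWalkAux ι bar b a ((l.map bar).reverse)
  | [], a, b, h => (show a = b from h).symm
  | e :: l, a, b, h => by
      have ih := isWalkAux_reverse ι bar hbar l _ b h.2
      simp only [List.map_cons, List.reverse_cons]
      refine isWalkAux_append ι bar _ [bar e] b (ι (bar e)) a ih ⟨rfl, ?_⟩
      show ι (bar (bar e)) = a
      rw [hbar]; exact h.1

lemma isWalkAux_head {V E : Type*} (ι : E → V) (bar : E → E) :
    ∀ (l : List E) (a b : V), IsWalkAux ι bar a b l → ∀ h : 0 < l.length,
      ι (l.get ⟨0, h⟩) = a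
  | e :: l, a, b, h, _ => h.1

lemma isWalkAux_get {V E : Type*} (ι : E → V) (bar : E → E) :
    ∀ (l : List E) (a b : V), IsWalkAux ι bar a b l → ∀ (i : ℕ) (h : i < l.length),
      ι (bar (l.get ⟨i, h⟩)) =
        if h' : i + 1 < l.length then ι (l.get ⟨i + 1, h'⟩) else b
  | e :: l, a, b, h, 0, hi => by
      cases l with
      | nil =>
          simp only [List.length_cons, List.length_nil]
          rw [dif_neg (by omega)]
          exact h.2
      | cons e' l' =>
          rw [dif_pos (by simp)]
          simp only [List.get]
          exact h.2.1.symm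
  | e :: l, a, b, h, i + 1, hi => by
      have ih := isWalkAux_get ι bar l _ b h.2 i (Nat.lt_of_succ_lt_succ hi)
      simp only [List.get_cons_succ] at *
      rw [ih]
      by_cases h' : i + 1 < l.length
      · rw [dif_pos h', dif_pos (by simpa using Nat.succ_lt_succ h')]
      · rw [dif_neg h', dif_neg (by intro hh; exact h' (by simpa using Nat.lt_of_succ_lt_succ hh))]

lemma isWalkAux_closed {V E : Type*} (ι : E → V) (bar : E → E)
    (l : List E) (v : V) (hl : l ≠ []) (h : IsWalkAux ι bar v v l) :
    IsClosedPath ι bar l := by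
  refine ⟨hl, fun i => ?_⟩
  have hg := isWalkAux_get ι bar l v v h i.1 i.2
  by_cases h' : i.1 + 1 < l.length
  · rw [dif_pos h'] at hg
    have hmod : (i.1 + 1) % l.length = i.1 + 1 := Nat.mod_eq_of_lt h'
    have : (⟨(i.1 + 1) % l.length, Nat.mod_lt _ i.pos⟩ : Fin l.length) = ⟨i.1 + 1, h'⟩ :=
      Fin.ext hmod
    rw [this]
    simpa using hg
  · rw [dif_neg h'] at hg
    have hlen : i.1 + 1 = l.length := by omega
    have hmod : (i.1 + 1) % l.length = 0 := by rw [hlen, Nat.mod_self]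
    have hpos : 0 < l.length := i.pos
    have : (⟨(i.1 + 1) % l.length, Nat.mod_lt _ i.pos⟩ : Fin l.length) = ⟨0, hpos⟩ :=
      Fin.ext hmod
    rw [this, isWalkAux_head ι bar l v v h hpos]
    simpa using hg

/-- Lemma 2.5: two labelings of a finite connected graph with the same absolute
values and the same orientation homomorphism differ by admissible sign changes,
i.e. by a sign η(e) = η(ē) on each geometric edge together with a sign μ(v) on
each vertex applied to all edges originating at v. -/
theorem stmt_7 {V E : Type*} [Fintype V] [Fintype E]
    (ι : E → V) (bar : E → E)
    (hbar : ∀ e, bar (bar e) = e) (hfix : ∀ e, bar e ≠ e)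
    (hconn : ∀ u v : V,
      Relation.ReflTransGen (fun a b => ∃ e, ι e = a ∧ ι (bar e) = b) u v)
    (lab lab' : E → ℤ)
    (hlab : ∀ e, lab e ≠ 0) (hlab' : ∀ e, lab' e ≠ 0)
    (habs : ∀ e, |lab e| = |lab' e|)
    (horient : ∀ l : List E, IsClosedPath ι bar l →
      (0 < pathModulus ι bar lab l ↔ 0 < pathModulus ι bar lab' l)) :
    ∃ (η : E → ℤˣ) (μ : V → ℤˣ),
      (∀ e, η (bar e) = η e) ∧
      ∀ e, lab' e = (η e : ℤ) * (μ (ι e) : ℤ) * lab e := by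
  classical
  rcases isEmpty_or_nonempty V with hV | hV
  · have hE : IsEmpty E := Function.isEmpty ι
    exact ⟨fun _ => 1, fun _ => 1, fun e => hE.elim e, fun e => hE.elim e⟩
  obtain ⟨v₀⟩ := hV
  set ε : E → ℤˣ := fun e => if lab' e = lab e then 1 else -1 with hεdef
  have hεlab : ∀ e, lab' e = ((ε e : ℤˣ) : ℤ) * lab e := by
    intro e
    by_cases h : lab' e = lab e
    · simp [hεdef, h]
    · rcases abs_eq_abs.mp (habs e) with h1 | h1
      · exact absurd h1.symm h
      · simp only [hεdef, if_neg h, Units.val_neg, Units.val_one]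
        omega
  set δ : E → ℤˣ := fun e => ε e * ε (bar e) with hδdef
  have hδbar : ∀ e, δ (bar e) = δ e := by
    intro e; simp only [hδdef, hbar e]; exact mul_comm _ _
  -- factor relation
  have hfac : ∀ e, ((lab' (bar e) : ℚ)) / ((lab' e : ℚ)) =
      ((δ e : ℤ) : ℚ) * ((lab (bar e) : ℚ) / (lab e : ℚ)) := by
    intro e
    rw [hεlab e, hεlab (bar e)]
    rcases Int.units_eq_one_or (ε e) with he | he <;>
      rcases Int.units_eq_one_or (ε (bar e)) with hb | hb <;>
        simp [hδdef, he, hb, neg_div, div_neg]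
  have hmod : ∀ l : List E, pathModulus ι bar lab' l =
      (((l.map δ).prod : ℤˣ) : ℤ) * pathModulus ι bar lab l := by
    intro l
    induction l with
    | nil => simp [pathModulus]
    | cons e l ih =>
        simp only [pathModulus, List.map_cons, List.prod_cons] at ih ⊢
        rw [hfac e, ih]
        push_cast
        ring
  have hMne : ∀ l : List E, pathModulus ι bar lab l ≠ 0 := by
    intro l
    induction l with
    | nil => simp [pathModulus]
    | cons e l ih =>
        simp only [pathModulus, List.map_cons, List.prod_cons] at ih ⊢
        exact mul_ne_zero (div_ne_zero (Int.cast_ne_zero.2 (hlab _))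
          (Int.cast_ne_zero.2 (hlab _))) ih
  have hclosed : ∀ l : List E, IsClosedPath ι bar l → (l.map δ).prod = 1 := by
    intro l hcl
    rcases Int.units_eq_one_or ((l.map δ).prod) with h | h
    · exact h
    · exfalso
      have hm := hmod l
      rw [h] at hm
      simp only [Units.val_neg, Units.val_one, Int.cast_neg, Int.cast_one, neg_mul,
        one_mul] at hm
      have hM := hMne l
      have hio := horient l hcl
      rcases lt_or_gt_of_ne hM with hlt | hgt
      · have : 0 < pathModulus ι bar lab' l := by rw [hm]; linarith
        have := hio.mpr this
        linarith
      · have := hio.mp hgt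
        rw [hm] at this
        linarith
  -- existence of walks
  have hex : ∀ v : V, ∃ l : List E, IsWalkAux ι bar v₀ v l := by
    intro v
    induction hconn v₀ v with
    | refl => exact ⟨[], rfl⟩
    | tail _ hstep ih =>
        obtain ⟨l, hl⟩ := ih
        obtain ⟨e, he1, he2⟩ := hstep
        exact ⟨l ++ [e], isWalkAux_append ι bar l [e] _ _ _ hl ⟨he1, he2⟩⟩
  -- products along walks with the same endpoints agree
  have hsame : ∀ (a b : V) (l l' : List E), IsWalkAux ι bar a b l →
      IsWalkAux ι bar a b l' → (l.map δ).prod = (l'.map δ).prod := by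
    intro a b l l' hl hl'
    have hrev := isWalkAux_reverse ι bar hbar l' a b hl'
    have hcat := isWalkAux_append ι bar l _ a b a hl hrev
    have hrevprod : (((l'.map bar).reverse).map δ).prod = (l'.map δ).prod := by
      have hcomp : δ ∘ bar = δ := funext hδbar
      rw [List.map_reverse, List.map_map, hcomp, List.prod_reverse]
    by_cases hnil : l ++ (l'.map bar).reverse = []
    · rcases List.append_eq_nil_iff.mp hnil with ⟨h1, h2⟩
      have h3 : l' = [] := by
        have := congrArg List.reverse h2
        simp only [List.reverse_reverse, List.reverse_nil] at this
        exact List.map_eq_nil_iff.mp this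
      rw [h1, h3]
    · have h1 := hclosed _ (isWalkAux_closed ι bar _ a hnil hcat)
      rw [List.map_append, List.prod_append, hrevprod] at h1
      set P := (l.map δ).prod
      set Q := (l'.map δ).prod
      calc P = P * (Q * Q) := by rw [Int.units_mul_self, mul_one]
        _ = (P * Q) * Q := by rw [mul_assoc]
        _ = Q := by rw [h1, one_mul]
  choose w hw using hex
  set μ : V → ℤˣ := fun v => ((w v).map δ).prod with hμdef
  have hμ : ∀ (a b : V) (l : List E), IsWalkAux ι bar a b l →
      μ b = μ a * (l.map δ).prod := by
    intro a b l hl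
    have hc : IsWalkAux ι bar v₀ b (w a ++ l) :=
      isWalkAux_append ι bar _ l v₀ a b (hw a) hl
    have := hsame v₀ b _ _ (hw b) hc
    simpa [hμdef, List.map_append, List.prod_append] using this
  have hμe : ∀ e, μ (ι (bar e)) = μ (ι e) * δ e := by
    intro e
    have := hμ (ι e) (ι (bar e)) [e] ⟨rfl, rfl⟩
    simpa using this
  refine ⟨fun e => ε e * μ (ι e), μ, ?_, ?_⟩
  · intro e
    show ε (bar e) * μ (ι (bar e)) = ε e * μ (ι e)
    rw [hμe e, hδdef]
    rcases Int.units_eq_one_or (ε e) with he | he <;>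
      rcases Int.units_eq_one_or (ε (bar e)) with hb | hb <;>
        simp [he, hb, mul_comm, mul_assoc, mul_left_comm]
  · intro e
    show lab' e = ((ε e * μ (ι e) : ℤˣ) : ℤ) * ((μ (ι e) : ℤˣ) : ℤ) * lab e
    rw [hεlab e, ← Units.val_mul, mul_assoc (ε e), Int.units_mul_self, mul_one]
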